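/- Let 0 < ε ≤ 1/8, let the input be ε-well-separated, and let π be a perfect matching. Let C be the set of indices of close and far edges of π. Then the minimum cost of a matching of the endpoints of C among themselves satisfies min_{μ : C → C bijection} ∑_{i ∈ C} |s(π(μ(i))) − r(i)| ≤ (1/ε + 3) · w_opt. -/

import Mathlib

/-- `x` lies in the interval `I_L' = [−εΔ, εΔ]`. -/
abbrev inIL (ε Δ x : ℝ) : Prop := -(ε * Δ) ≤ x ∧ x ≤ ε * Δ

/-- `x` lies in the interval `I_R' = [(1−ε)Δ, (1+ε)Δ]`. -/
abbrev inIR (ε Δ x : ℝ) : Prop := (1 - ε) * Δ ≤ x ∧ x ≤ (1 + ε) * Δ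

/-- Index `i` is a close edge of the matching `π`. -/
abbrev isCloseEdge (n : ℕ) (s r : Fin n → ℝ) (ε Δ : ℝ) (π : Equiv.Perm (Fin n))
    (i : Fin n) : Prop :=
  (inIL ε Δ (s (π i)) ∧ inIL ε Δ (r i)) ∨ (inIR ε Δ (s (π i)) ∧ inIR ε Δ (r i))

/-- Index `i` is a far edge of the matching `π`. -/
abbrev isFarEdge (n : ℕ) (s r : Fin n → ℝ) (ε Δ : ℝ) (π : Equiv.Perm (Fin n))
    (i : Fin n) : Prop :=
  (inIL ε Δ (s (π i)) ∧ inIR ε Δ (r i)) ∨ (inIR ε Δ (s (π i)) ∧ inIL ε Δ (r i))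


lemma rematch_aux {n : ℕ} (s r : Fin n → ℝ) (P : Fin n → Prop)
    [DecidablePred P] (π σ₀ : Equiv.Perm (Fin n)) (c : ℝ) (hc : 0 ≤ c)
    (habs : ∀ i j : Fin n, P i → P j → |s (π j) - r i| ≤ c) :
    ∃ μ : Equiv.Perm {i : Fin n // P i},
      ∑ i : {i : Fin n // P i}, |s (π (μ i).1) - r i.1| ≤
        (∑ i, |s (σ₀ i) - r i|) +
          ((Finset.univ.filter (fun i => ¬ P i)).card : ℝ) * c := by
  classical
  set ρ : Equiv.Perm (Fin n) := σ₀.trans π.symm with hρ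
  have hπρ : ∀ i, π (ρ i) = σ₀ i := fun i => Equiv.apply_symm_apply π (σ₀ i)
  set Cfin : Finset (Fin n) := Finset.univ.filter P with hCfin
  set Mfin : Finset (Fin n) := Finset.univ.filter (fun i => ¬ P i) with hMfin
  set A : Finset (Fin n) := Cfin.filter (fun i => ¬ P (ρ i)) with hA
  set B : Finset (Fin n) := Cfin.filter (fun i => ¬ P (ρ.symm i)) with hB
  set D : Finset (Fin n) := Cfin.filter (fun i => P (ρ i)) with hD
  set D' : Finset (Fin n) := Cfin.filter (fun i => P (ρ.symm i)) with hD'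
  have hDD' : D.card = D'.card := by
    apply Finset.card_bij (fun i _ => ρ i)
    · intro a ha
      simp only [hD, hD', hCfin, Finset.mem_filter, Finset.mem_univ, true_and] at ha ⊢
      exact ⟨ha.2, by simpa using ha.1⟩
    · intro a _ b _ h
      exact ρ.injective h
    · intro b hb
      simp only [hD, hD', hCfin, Finset.mem_filter, Finset.mem_univ, true_and] at hb ⊢
      exact ⟨ρ.symm b, ⟨hb.2, by simpa using hb.1⟩, by simp⟩
  have hsplit1 : D.card + A.card = Cfin.card :=
    Finset.card_filter_add_card_filter_not (p := fun i => P (ρ i))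
  have hsplit2 : D'.card + B.card = Cfin.card :=
    Finset.card_filter_add_card_filter_not (p := fun i => P (ρ.symm i))
  have hAB : A.card = B.card := by omega
  set θ : {x // x ∈ A} ≃ {x // x ∈ B} := Finset.equivOfCardEq hAB with hθ
  have hmemA : ∀ i : {i : Fin n // P i}, ¬ P (ρ i.1) → i.1 ∈ A := by
    intro i h
    simp only [hA, hCfin, Finset.mem_filter, Finset.mem_univ, true_and]
    exact ⟨i.2, h⟩
  have hBP : ∀ j : Fin n, j ∈ B → P j := by
    intro j hj
    simp only [hB, hCfin, Finset.mem_filter, Finset.mem_univ, true_and] at hj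
    exact hj.1
  set F : {i : Fin n // P i} → {i : Fin n // P i} := fun i =>
    if h : P (ρ i.1) then ⟨ρ i.1, h⟩
    else ⟨(θ ⟨i.1, hmemA i h⟩ : Fin n), hBP _ (θ ⟨i.1, hmemA i h⟩).2⟩ with hF
  have hFinj : Function.Injective F := by
    intro a b hab
    simp only [hF] at hab
    by_cases ha : P (ρ a.1) <;> by_cases hb : P (ρ b.1)
    · rw [dif_pos ha, dif_pos hb] at hab
      exact Subtype.ext (ρ.injective (congrArg Subtype.val hab))
    · rw [dif_pos ha, dif_neg hb] at hab
      exfalso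
      have h1 : (θ ⟨b.1, hmemA b hb⟩ : Fin n) ∈ B := (θ ⟨b.1, hmemA b hb⟩).2
      have h2 : ρ a.1 = (θ ⟨b.1, hmemA b hb⟩ : Fin n) := congrArg Subtype.val hab
      simp only [hB, hCfin, Finset.mem_filter] at h1
      rw [← h2] at h1
      simp only [Equiv.symm_apply_apply] at h1
      exact h1.2 a.2
    · rw [dif_neg ha, dif_pos hb] at hab
      exfalso
      have h1 : (θ ⟨a.1, hmemA a ha⟩ : Fin n) ∈ B := (θ ⟨a.1, hmemA a ha⟩).2
      have h2 : (θ ⟨a.1, hmemA a ha⟩ : Fin n) = ρ b.1 := congrArg Subtype.val hab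
      simp only [hB, hCfin, Finset.mem_filter] at h1
      rw [h2] at h1
      simp only [Equiv.symm_apply_apply] at h1
      exact h1.2 b.2
    · rw [dif_neg ha, dif_neg hb] at hab
      rw [Subtype.mk.injEq] at hab
      have h3 : (⟨a.1, hmemA a ha⟩ : {x // x ∈ A}) = ⟨b.1, hmemA b hb⟩ :=
        θ.injective (Subtype.ext hab)
      rw [Subtype.mk.injEq] at h3
      exact Subtype.ext h3
  refine ⟨Equiv.ofBijective F (Finite.injective_iff_bijective.mp hFinj), ?_⟩
  have hpt : ∀ i : {i : Fin n // P i},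
      |s (π ((Equiv.ofBijective F (Finite.injective_iff_bijective.mp hFinj)) i).1) - r i.1| ≤
        (if P (ρ i.1) then |s (σ₀ i.1) - r i.1| else c) := by
    intro i
    show |s (π (F i).1) - r i.1| ≤ _
    by_cases h : P (ρ i.1)
    · simp [hF, dif_pos h, if_pos h, hπρ]
    · simp only [hF, dif_neg h, if_neg h]
      exact habs i.1 _ i.2 (hBP _ (θ ⟨i.1, hmemA i h⟩).2)
  calc ∑ i : {i : Fin n // P i},
        |s (π ((Equiv.ofBijective F (Finite.injective_iff_bijective.mp hFinj)) i).1) - r i.1|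
      ≤ ∑ i : {i : Fin n // P i}, (if P (ρ i.1) then |s (σ₀ i.1) - r i.1| else c) :=
        Finset.sum_le_sum fun i _ => hpt i
    _ = ∑ i ∈ Cfin, (if P (ρ i) then |s (σ₀ i) - r i| else c) := by
        have hsub : ∀ x : Fin n, x ∈ Cfin ↔ P x := fun x => by simp [hCfin]
        exact (Finset.sum_subtype (p := P) Cfin hsub (fun i => if P (ρ i) then |s (σ₀ i) - r i| else c)).symm
    _ = (∑ i ∈ D, |s (σ₀ i) - r i|) + ∑ i ∈ A, c := by
        rw [← Finset.sum_filter_add_sum_filter_not Cfin (fun i => P (ρ i))]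
        congr 1
        · exact Finset.sum_congr rfl fun i hi => by
            simp only [hD, Finset.mem_filter] at hi; rw [if_pos hi.2]
        · exact Finset.sum_congr rfl fun i hi => by
            simp only [hA, Finset.mem_filter] at hi; rw [if_neg hi.2]
    _ ≤ (∑ i, |s (σ₀ i) - r i|) + (Mfin.card : ℝ) * c := by
        gcongr ?_ + ?_
        · exact Finset.sum_le_univ_sum_of_nonneg fun i => abs_nonneg _
        · rw [Finset.sum_const, nsmul_eq_mul]
          have hAM : A.card ≤ Mfin.card := by
            apply Finset.card_le_card_of_injOn (fun i => ρ i)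
            · intro i hi
              have hi' : i ∈ A := by exact_mod_cast hi
              simp only [hA, Finset.mem_filter] at hi'
              simp only [hMfin, Finset.coe_filter, Finset.mem_coe, Finset.mem_filter, Finset.mem_univ, true_and, Set.mem_setOf_eq]
              exact hi'.2
            · exact ρ.injective.injOn
          exact mul_le_mul_of_nonneg_right (by exact_mod_cast hAM) hc

/-- For an `ε`-well-separated input (with `0 < ε ≤ 1/8`) and a
perfect matching `π`, let `C` be the set of indices of close and far edges.
Then the minimum, over bijections `μ : C → C`, of the cost of rematching the
endpoints of `C` among themselves is at most `(1/ε + 3) · w_opt`. -/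
theorem close_far_rematch_bound (n : ℕ) (hn : 1 ≤ n) (s r : Fin n → ℝ)
    (Δ ε : ℝ) (hΔ : 0 < Δ) (hε0 : 0 < ε) (hε : ε ≤ 1 / 8)
    (hsep_s : ∀ i, (-(ε * Δ) ≤ s i ∧ s i ≤ 0) ∨ (Δ ≤ s i ∧ s i ≤ (1 + ε) * Δ))
    (hsep_r : ∀ i, -(ε * Δ) ≤ r i ∧ r i ≤ (1 + ε) * Δ)
    (π : Equiv.Perm (Fin n)) :
    (⨅ μ : Equiv.Perm {i : Fin n //
        isCloseEdge n s r ε Δ π i ∨ isFarEdge n s r ε Δ π i},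
      ∑ i : {i : Fin n // isCloseEdge n s r ε Δ π i ∨ isFarEdge n s r ε Δ π i},
        |s (π (μ i).1) - r i.1|) ≤
      (1 / ε + 3) * (⨅ σ : Equiv.Perm (Fin n), ∑ i, |s (σ i) - r i|) := by
  classical
  set P : Fin n → Prop :=
    fun i => isCloseEdge n s r ε Δ π i ∨ isFarEdge n s r ε Δ π i with hPd
  have hεΔ : 0 < ε * Δ := mul_pos hε0 hΔ
  have hεne : ε ≠ 0 := ne_of_gt hε0
  -- every server lies in [-εΔ, (1+ε)Δ]
  have hsl : ∀ j, -(ε * Δ) ≤ s j ∧ s j ≤ (1 + ε) * Δ := by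
    intro j
    rcases hsep_s j with ⟨h1, h2⟩ | ⟨h1, h2⟩ <;> constructor <;> nlinarith
  -- every server lies in I_L' ∪ I_R'
  have hsLR : ∀ j, inIL ε Δ (s j) ∨ inIR ε Δ (s j) := by
    intro j
    rcases hsep_s j with ⟨h1, h2⟩ | ⟨h1, h2⟩
    · exact Or.inl ⟨h1, by nlinarith⟩
    · exact Or.inr ⟨by nlinarith, h2⟩
  -- extreme requests give close/far edges
  have hPiff : ∀ i, (r i ≤ ε * Δ ∨ (1 - ε) * Δ ≤ r i) → P i := by
    intro i h
    rcases hsLR (π i) with hL | hR <;> rcases h with h | h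
    · exact Or.inl (Or.inl ⟨hL, (hsep_r i).1, h⟩)
    · exact Or.inr (Or.inl ⟨hL, h, (hsep_r i).2⟩)
    · exact Or.inr (Or.inr ⟨hR, (hsep_r i).1, h⟩)
    · exact Or.inl (Or.inr ⟨hR, h, (hsep_r i).2⟩)
  -- optimal matching
  obtain ⟨σ₀, hσ₀⟩ :=
    Finite.exists_min (fun σ : Equiv.Perm (Fin n) => ∑ i, |s (σ i) - r i|)
  set w₀ : ℝ := ∑ i, |s (σ₀ i) - r i| with hw₀d
  have hw₀nn : 0 ≤ w₀ := Finset.sum_nonneg fun i _ => abs_nonneg _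
  -- medium edges cost at least εΔ under σ₀
  have hmed : ∀ i, ¬ P i → ε * Δ ≤ |s (σ₀ i) - r i| := by
    intro i hi
    have h1 : ε * Δ < r i := by
      by_contra h
      exact hi (hPiff i (Or.inl (le_of_not_gt h)))
    have h2 : r i < (1 - ε) * Δ := by
      by_contra h
      exact hi (hPiff i (Or.inr (le_of_not_gt h)))
    have he : (1 - ε) * Δ = Δ - ε * Δ := by ring
    rcases hsep_s (σ₀ i) with ⟨_, hs2⟩ | ⟨hs1, _⟩
    · have := neg_abs_le (s (σ₀ i) - r i); linarith
    · have := le_abs_self (s (σ₀ i) - r i); linarith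
  -- diameter bound
  have habs : ∀ i j : Fin n, P i → P j → |s (π j) - r i| ≤ (1 + 2 * ε) * Δ := by
    intro i j _ _
    have h1 := hsl (π j)
    have h2 := hsep_r i
    rw [abs_le]
    constructor <;> nlinarith [h1.1, h1.2, h2.1, h2.2]
  obtain ⟨μ, hμ⟩ := rematch_aux s r P π σ₀ ((1 + 2 * ε) * Δ)
    (by positivity) habs
  set mR : ℝ := ((Finset.univ.filter (fun i => ¬ P i)).card : ℝ) with hmRd
  -- medium count bound
  have hm : mR * (ε * Δ) ≤ w₀ := by
    have h1 : ∑ _i ∈ Finset.univ.filter (fun i => ¬ P i), (ε * Δ) ≤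
        ∑ i ∈ Finset.univ.filter (fun i => ¬ P i), |s (σ₀ i) - r i| :=
      Finset.sum_le_sum fun i hi => hmed i (Finset.mem_filter.mp hi).2
    rw [Finset.sum_const, nsmul_eq_mul] at h1
    exact h1.trans (Finset.sum_le_univ_sum_of_nonneg fun i => abs_nonneg _)
  have key : mR * ((1 + 2 * ε) * Δ) ≤ (1 / ε + 2) * w₀ := by
    have h1 : (1 / ε + 2) * (mR * (ε * Δ)) ≤ (1 / ε + 2) * w₀ :=
      mul_le_mul_of_nonneg_left hm (by positivity)
    calc mR * ((1 + 2 * ε) * Δ) = (1 / ε + 2) * (mR * (ε * Δ)) := by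
          field_simp
      _ ≤ (1 / ε + 2) * w₀ := h1
  have hfin : w₀ + mR * ((1 + 2 * ε) * Δ) ≤ (1 / ε + 3) * w₀ := by
    have : (1 / ε + 3) * w₀ = w₀ + (1 / ε + 2) * w₀ := by ring
    linarith
  calc (⨅ μ' : Equiv.Perm {i : Fin n // P i},
        ∑ i : {i : Fin n // P i}, |s (π (μ' i).1) - r i.1|)
      ≤ ∑ i : {i : Fin n // P i}, |s (π (μ i).1) - r i.1| :=
        ciInf_le (Set.finite_range _).bddBelow μ
    _ ≤ w₀ + mR * ((1 + 2 * ε) * Δ) := hμ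
    _ ≤ (1 / ε + 3) * w₀ := hfin
    _ ≤ (1 / ε + 3) * (⨅ σ : Equiv.Perm (Fin n), ∑ i, |s (σ i) - r i|) :=
        mul_le_mul_of_nonneg_left (le_ciInf hσ₀) (by positivity)
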